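/- Let $G: (0,\infty) \to \mathbb{R}$ be a $C^1$ function with $G > 0$, $G' \geq 0$, and suppose there is a constant $C_0 > 0$ such that $G'(x)x \leq C_0 G(x)$ for all sufficiently large $x$. Then for all sufficiently large $z > 0$: $1 - G(z)z^2 \int_z^{+\infty} \frac{G'(x)}{G(x)^2 x^2}\,dx \geq \frac{2}{2+C_0}$. -/

import Mathlib

open Set MeasureTheory Filter Topology

/-- The tail-integral estimate (3.38): for `z` large,
`1 - G(z) z² ∫_z^∞ G'(x)/(G(x)² x²) dx ≥ 2/(2+C₀)`. -/
theorem tail_integral_estimate (G : ℝ → ℝ) (C₀ : ℝ) (hC₀ : 0 < C₀)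
    (hGpos : ∀ x > (0:ℝ), 0 < G x)
    (hGdiff : ∀ x > (0:ℝ), DifferentiableAt ℝ G x)
    (hG'cont : ContinuousOn (deriv G) (Ioi 0))
    (hG'nn : ∀ x > (0:ℝ), 0 ≤ deriv G x)
    (hC : ∃ x₁ > (0:ℝ), ∀ x ≥ x₁, deriv G x * x ≤ C₀ * G x)
    (hint₁ : ∀ z > (0:ℝ),
      IntegrableOn (fun x => 1 / (G x * x ^ 3)) (Ioi z))
    (hint₂ : ∀ z > (0:ℝ),
      IntegrableOn (fun x => deriv G x / ((G x) ^ 2 * x ^ 2)) (Ioi z)) :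
    ∃ z₀ > (0:ℝ), ∀ z ≥ z₀,
      2 / (2 + C₀) ≤
        1 - G z * z ^ 2 * ∫ x in Ioi z, deriv G x / ((G x) ^ 2 * x ^ 2) := by
  obtain ⟨x₁, hx₁pos, hx₁⟩ := hC
  refine ⟨max x₁ 1, lt_of_lt_of_le one_pos (le_max_right _ _), fun z hz => ?_⟩
  have hz1 : (1:ℝ) ≤ z := le_trans (le_max_right _ _) hz
  have hzx₁ : x₁ ≤ z := le_trans (le_max_left _ _) hz
  have hzpos : (0:ℝ) < z := lt_of_lt_of_le one_pos hz1
  have hGz : 0 < G z := hGpos z hzpos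
  -- monotonicity of G on Ioi 0
  have hmono : MonotoneOn G (Ioi 0) := by
    apply monotoneOn_of_deriv_nonneg (convex_Ioi 0)
    · exact fun x hx => (hGdiff x hx).continuousAt.continuousWithinAt
    · rw [interior_Ioi]; exact fun x hx => (hGdiff x hx).differentiableWithinAt
    · rw [interior_Ioi]; exact fun x hx => hG'nn x hx
  -- the antiderivative
  set f : ℝ → ℝ := fun x => -(G x * x ^ 2)⁻¹ with hf
  have hderiv : ∀ x ∈ Ici z, HasDerivAt f
      (deriv G x / ((G x) ^ 2 * x ^ 2) + 2 * (1 / (G x * x ^ 3))) x := by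
    intro x hx
    have hxpos : (0:ℝ) < x := lt_of_lt_of_le hzpos hx
    have hGx : 0 < G x := hGpos x hxpos
    have h1 : HasDerivAt (fun x => G x * x ^ 2)
        (deriv G x * x ^ 2 + G x * (2 * x)) x := by
      have := ((hGdiff x hxpos).hasDerivAt).mul ((hasDerivAt_pow 2 x))
      exact this.congr_deriv (by norm_num)
    have h2 := (h1.inv (by positivity)).neg
    refine h2.congr_deriv ?_
    field_simp
  -- tendsto 0 at top
  have htend : Tendsto f atTop (𝓝 0) := by
    rw [show (0:ℝ) = -0 by ring]
    apply Tendsto.neg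
    have hup : ∀ᶠ x in atTop, (G x * x ^ 2)⁻¹ ≤ (G z)⁻¹ * (x ^ 2)⁻¹ := by
      filter_upwards [eventually_ge_atTop z] with x hx
      have hxpos : (0:ℝ) < x := lt_of_lt_of_le hzpos hx
      have hGx : 0 < G x := hGpos x hxpos
      have hGzx : G z ≤ G x := hmono hzpos hxpos hx
      rw [mul_inv]
      gcongr
    have hlo : ∀ᶠ x in atTop, 0 ≤ (G x * x ^ 2)⁻¹ := by
      filter_upwards [eventually_ge_atTop z] with x hx
      have hxpos : (0:ℝ) < x := lt_of_lt_of_le hzpos hx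
      have hGx : 0 < G x := hGpos x hxpos
      positivity
    have hub : Tendsto (fun x : ℝ => (G z)⁻¹ * (x ^ 2)⁻¹) atTop (𝓝 0) := by
      have hp : Tendsto (fun x : ℝ => (x ^ 2)⁻¹) atTop (𝓝 0) :=
        tendsto_inv_atTop_zero.comp (tendsto_pow_atTop two_ne_zero)
      simpa using hp.const_mul ((G z)⁻¹)
    exact squeeze_zero' hlo hup hub
  -- integrability of the sum
  have hintsum : IntegrableOn
      (fun x => deriv G x / ((G x) ^ 2 * x ^ 2) + 2 * (1 / (G x * x ^ 3))) (Ioi z) :=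
    (hint₂ z hzpos).add ((hint₁ z hzpos).const_mul 2)
  have key : ∫ x in Ioi z,
      (deriv G x / ((G x) ^ 2 * x ^ 2) + 2 * (1 / (G x * x ^ 3)))
      = (G z * z ^ 2)⁻¹ := by
    rw [integral_Ioi_of_hasDerivAt_of_tendsto' hderiv hintsum htend]
    simp [hf]
  have hsplit : ∫ x in Ioi z,
      (deriv G x / ((G x) ^ 2 * x ^ 2) + 2 * (1 / (G x * x ^ 3)))
      = (∫ x in Ioi z, deriv G x / ((G x) ^ 2 * x ^ 2))
        + 2 * ∫ x in Ioi z, 1 / (G x * x ^ 3) := by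
    rw [integral_add (hint₂ z hzpos) ((hint₁ z hzpos).const_mul 2),
      integral_const_mul]
  set I := ∫ x in Ioi z, deriv G x / ((G x) ^ 2 * x ^ 2) with hI
  set J := ∫ x in Ioi z, 1 / (G x * x ^ 3) with hJ
  have hIJ : I + 2 * J = (G z * z ^ 2)⁻¹ := by rw [← hsplit, key]
  -- I ≤ C₀ J
  have hle : I ≤ C₀ * J := by
    rw [hI, hJ, ← integral_const_mul]
    apply setIntegral_mono_on (hint₂ z hzpos) ((hint₁ z hzpos).const_mul C₀)
      measurableSet_Ioi
    intro x hx
    have hxpos : (0:ℝ) < x := lt_trans hzpos hx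
    have hGx : 0 < G x := hGpos x hxpos
    have h1 : deriv G x * x ≤ C₀ * G x := hx₁ x (le_trans hzx₁ (le_of_lt hx))
    rw [mul_one_div, div_le_div_iff₀ (by positivity) (by positivity)]
    nlinarith [mul_le_mul_of_nonneg_right h1 (show (0:ℝ) ≤ G x * x ^ 2 by positivity)]
  have hA : (0:ℝ) < G z * z ^ 2 := by positivity
  have h2 : G z * z ^ 2 * I ≤ C₀ / (2 + C₀) := by
    rw [le_div_iff₀ (by positivity)]
    have h3 : (2 + C₀) * I ≤ C₀ * (G z * z ^ 2)⁻¹ := by nlinarith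
    calc G z * z ^ 2 * I * (2 + C₀) = (G z * z ^ 2) * ((2 + C₀) * I) := by ring
      _ ≤ (G z * z ^ 2) * (C₀ * (G z * z ^ 2)⁻¹) :=
          mul_le_mul_of_nonneg_left h3 hA.le
      _ = C₀ := by field_simp
  have h4 : 2 / (2 + C₀) + C₀ / (2 + C₀) = 1 := by
    field_simp
  linarith
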